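/- Fix M > 0 and ρ ∈ (0,1/2). With λ_r, α_r = −λ_r, β_r = ρ·ln(r·λ_r)/r − λ_r as above, define γ_r = (M − β_r)/(α_r − β_r). Then γ_r > 1 for all r ∈ (0, 1/(Me)), and γ_r → 1 as r → 0⁺. -/

import Mathlib

open Real Filter

theorem stmt_15 (M ρ : ℝ) (hM : 0 < M) (hρ0 : 0 < ρ) (hρ1 : ρ < 1 / 2)
    (lam : ℝ → ℝ)
    (hlam : ∀ r ∈ Set.Ioo 0 (1 / (M * Real.exp 1)),
      0 < lam r ∧ lam r < 1 / r ∧ M * Real.exp (r * lam r) = lam r) :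
    (∀ r ∈ Set.Ioo 0 (1 / (M * Real.exp 1)),
      1 < (M - (ρ * Real.log (r * lam r) / r - lam r))
            / ((-lam r) - (ρ * Real.log (r * lam r) / r - lam r))) ∧
    Tendsto (fun r => (M - (ρ * Real.log (r * lam r) / r - lam r))
            / ((-lam r) - (ρ * Real.log (r * lam r) / r - lam r)))
        (nhdsWithin 0 (Set.Ioo 0 (1 / (M * Real.exp 1)))) (nhds 1) := by
  -- Basic facts for each r in the interval
  have key : ∀ r ∈ Set.Ioo 0 (1 / (M * Real.exp 1)),
      0 < r ∧ 0 < lam r ∧ r * lam r < 1 ∧ Real.log (r * lam r) < 0 ∧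
      lam r ≤ M * Real.exp 1 := by
    intro r hr
    obtain ⟨h1, h2, h3⟩ := hlam r hr
    have hr0 : 0 < r := hr.1
    have hrl1 : r * lam r < 1 := by
      have := (lt_div_iff₀ hr0).mp h2
      linarith [this, mul_comm r (lam r)]
    have hrl0 : 0 < r * lam r := mul_pos hr0 h1
    have hlog : Real.log (r * lam r) < 0 := Real.log_neg hrl0 hrl1
    refine ⟨hr0, h1, hrl1, hlog, ?_⟩
    have hexp : Real.exp (r * lam r) ≤ Real.exp 1 := by
      exact Real.exp_le_exp.mpr hrl1.le
    nlinarith [h3, hM]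
  constructor
  · intro r hr
    obtain ⟨hr0, h1, hrl1, hlog, _⟩ := key r hr
    have hD : 0 < (-lam r) - (ρ * Real.log (r * lam r) / r - lam r) := by
      have h4 : ρ * Real.log (r * lam r) < 0 := mul_neg_of_pos_of_neg hρ0 hlog
      have h5 : ρ * Real.log (r * lam r) / r < 0 := div_neg_of_neg_of_pos h4 hr0
      linarith
    rw [one_lt_div hD]
    linarith
  · -- Tendsto part
    set g : ℝ → ℝ := fun r => ((M + lam r) * r) * (-(ρ * Real.log (r * lam r)))⁻¹
      with hg
    have heq : ∀ᶠ r in nhdsWithin 0 (Set.Ioo 0 (1 / (M * Real.exp 1))),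
        (M - (ρ * Real.log (r * lam r) / r - lam r))
            / ((-lam r) - (ρ * Real.log (r * lam r) / r - lam r)) = 1 + g r := by
      filter_upwards [eventually_mem_nhdsWithin] with r hr
      obtain ⟨hr0, h1, hrl1, hlog, _⟩ := key r hr
      have hρne : ρ ≠ 0 := ne_of_gt hρ0
      have hlogne : Real.log (r * lam r) ≠ 0 := ne_of_lt hlog
      have hrne : r ≠ 0 := ne_of_gt hr0
      have hDne : (-lam r) - (ρ * Real.log (r * lam r) / r - lam r) ≠ 0 := by
        have h4 : ρ * Real.log (r * lam r) < 0 := mul_neg_of_pos_of_neg hρ0 hlog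
        have h5 : ρ * Real.log (r * lam r) / r < 0 := div_neg_of_neg_of_pos h4 hr0
        intro h; rw [sub_eq_zero] at h; nlinarith
      rw [div_eq_iff hDne, hg]
      field_simp
      ring
    -- numerator tends to 0
    have hnum : Tendsto (fun r => (M + lam r) * r)
        (nhdsWithin 0 (Set.Ioo 0 (1 / (M * Real.exp 1)))) (nhds 0) := by
      have hlim : Tendsto (fun r : ℝ => (M + M * Real.exp 1) * r)
          (nhdsWithin 0 (Set.Ioo 0 (1 / (M * Real.exp 1)))) (nhds 0) := by
        have : Tendsto (fun r : ℝ => (M + M * Real.exp 1) * r) (nhds 0)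
            (nhds ((M + M * Real.exp 1) * 0)) := (continuous_const.mul continuous_id).tendsto 0
        rw [mul_zero] at this
        exact this.mono_left nhdsWithin_le_nhds
      refine squeeze_zero' ?_ ?_ hlim
      · filter_upwards [eventually_mem_nhdsWithin] with r hr
        obtain ⟨hr0, h1, _, _, _⟩ := key r hr
        positivity
      · filter_upwards [eventually_mem_nhdsWithin] with r hr
        obtain ⟨hr0, h1, _, _, hle⟩ := key r hr
        have : M + lam r ≤ M + M * Real.exp 1 := by linarith
        nlinarith
    -- denominator tends to atTop
    have hden : Tendsto (fun r => -(ρ * Real.log (r * lam r)))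
        (nhdsWithin 0 (Set.Ioo 0 (1 / (M * Real.exp 1)))) atTop := by
      have hbound : Tendsto (fun r : ℝ => -ρ * (Real.log r + Real.log (M * Real.exp 1)))
          (nhdsWithin 0 (Set.Ioo 0 (1 / (M * Real.exp 1)))) atTop := by
        have h1 : Tendsto Real.log (nhdsWithin 0 (Set.Ioo 0 (1 / (M * Real.exp 1)))) atBot := by
          exact Real.tendsto_log_nhdsGT_zero.mono_left
            (nhdsWithin_mono 0 Set.Ioo_subset_Ioi_self)
        have h2 : Tendsto (fun r : ℝ => Real.log r + Real.log (M * Real.exp 1))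
            (nhdsWithin 0 (Set.Ioo 0 (1 / (M * Real.exp 1)))) atBot :=
          tendsto_atBot_add_const_right _ _ h1
        exact Tendsto.const_mul_atBot_of_neg (neg_neg_iff_pos.mpr hρ0) h2
      apply tendsto_atTop_mono' _ _ hbound
      filter_upwards [eventually_mem_nhdsWithin] with r hr
      obtain ⟨hr0, h1, hrl1, hlog, hle⟩ := key r hr
      have hMe : 0 < M * Real.exp 1 := by positivity
      have hlog2 : Real.log (r * lam r) ≤ Real.log (r * (M * Real.exp 1)) := by
        apply Real.log_le_log (mul_pos hr0 h1)
        exact mul_le_mul_of_nonneg_left hle hr0.le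
      have hlog3 : Real.log (r * (M * Real.exp 1)) = Real.log r + Real.log (M * Real.exp 1) :=
        Real.log_mul (ne_of_gt hr0) (ne_of_gt hMe)
      nlinarith [mul_le_mul_of_nonneg_left hlog2 hρ0.le]
    have hg0 : Tendsto g (nhdsWithin 0 (Set.Ioo 0 (1 / (M * Real.exp 1)))) (nhds 0) := by
      have := hnum.mul hden.inv_tendsto_atTop
      rw [mul_zero] at this
      exact this
    have : Tendsto (fun r => 1 + g r)
        (nhdsWithin 0 (Set.Ioo 0 (1 / (M * Real.exp 1)))) (nhds (1 + 0)) :=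
      tendsto_const_nhds.add hg0
    rw [add_zero] at this
    exact this.congr' (Filter.EventuallyEq.symm heq)
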